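/- Let A be a Noetherian ring and {I_n}_{n∈ℕ} a Noetherian filtration of ideals of A (i.e., I_0 = A, I_{n+1} ⊆ I_n, I_n·I_m ⊆ I_{n+m}, and there exists c ≥ 1 with I_n·I_c = I_{n+c} for all n ≥ c). Define H⁰_{{I_n}}(A) = {x ∈ A : I_n·x = 0 for some n ≥ 0}. Then there exists an integer n_1 ≥ 0 such that I_n ∩ H⁰_{{I_n}}(A) = 0 for all n ≥ n_1. -/
import Mathlib


/-- for a Noetherian filtration `{I_n}` of ideals of a Noetherian
commutative ring `A` (`I_0 = A`, `I_{n+1} ⊆ I_n`, `I_n I_m ⊆ I_{n+m}`, and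
`I_n I_c = I_{n+c}` for some `c ≥ 1` and all `n ≥ c`), there exists `n_1` such
that `I_n ∩ H⁰_{{I_n}}(A) = 0` for all `n ≥ n_1`, where
`H⁰_{{I_n}}(A) = {x : I_m x = 0 for some m}`. -/
theorem filtration_eventually_meets_torsion_trivially
    (A : Type*) [CommRing A] [IsNoetherianRing A]
    (I : ℕ → Ideal A)
    (h0 : I 0 = ⊤)
    (hdec : ∀ n, I (n + 1) ≤ I n)
    (hmul : ∀ m n, I m * I n ≤ I (m + n))
    (hNoeth : ∃ c : ℕ, 1 ≤ c ∧ ∀ n, c ≤ n → I n * I c = I (n + c)) :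
    ∃ n1 : ℕ, ∀ n, n1 ≤ n → ∀ x ∈ I n,
      (∃ m : ℕ, ∀ y ∈ I m, y * x = 0) → x = 0 := by
  obtain ⟨c, hc1, hc⟩ := hNoeth
  -- antitonicity of I
  have hant : ∀ {m n : ℕ}, m ≤ n → I n ≤ I m := by
    intro m n h
    induction h with
    | refl => exact le_rfl
    | step h ih => exact le_trans (hdec _) (by assumption)
  -- powers of I c
  have hpow : ∀ s : ℕ, 1 ≤ s → (I c) ^ s = I (c * s) := by
    intro s hs
    induction s with
    | zero => omega
    | succ t ih =>
      rcases Nat.eq_or_lt_of_le hs with h | h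
      · simp [← h, mul_one]
      · have ht : 1 ≤ t := by omega
        have : c ≤ c * t := Nat.le_mul_of_pos_right c (by omega)
        rw [pow_succ, ih ht, Nat.mul_succ, ← hc (c * t) this]
  -- the chain of annihilators
  let K : ℕ →o Submodule A A :=
    ⟨fun m => Submodule.annihilator (I m : Submodule A A), by
      intro m n h x hx
      rw [Submodule.mem_annihilator] at hx ⊢
      exact fun y hy => hx y (hant h hy)⟩
  obtain ⟨m0, hm0⟩ := monotone_stabilizes_iff_noetherian.mpr ‹IsNoetherianRing A› K
  -- Artin--Rees
  obtain ⟨k, hk⟩ := Ideal.exists_pow_inf_eq_pow_smul (I c) (K m0)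
  refine ⟨c * (k + m0 + 1), fun n hn x hxI hx => ?_⟩
  -- x lies in K m0
  have hxK : x ∈ K m0 := by
    obtain ⟨m, hm⟩ := hx
    have hx' : x ∈ K (max m m0) := by
      show x ∈ Submodule.annihilator (I (max m m0) : Submodule A A)
      rw [Submodule.mem_annihilator]
      intro y hy
      rw [smul_eq_mul, mul_comm]
      exact hm y (hant (le_max_left _ _) hy)
    rwa [← hm0 (max m m0) (le_max_right _ _)] at hx'
  -- x lies in (I c)^(k+m0+1)
  have hxP : x ∈ (I c) ^ (k + m0 + 1) := by
    rw [hpow _ (by omega)]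
    exact hant hn hxI
  have hmem : x ∈ (I c) ^ (k + m0 + 1) • (⊤ : Submodule A A) ⊓ (K m0) := by
    constructor
    · simpa [Ideal.smul_top_eq_map] using hxP
    · exact hxK
  rw [hk (k + m0 + 1) (by omega)] at hmem
  have hred : (I c) ^ (k + m0 + 1 - k) • ((I c) ^ k • (⊤ : Submodule A A) ⊓ K m0)
      ≤ (⊥ : Submodule A A) := by
    refine le_trans (Submodule.smul_mono le_rfl inf_le_right) ?_
    rw [Submodule.smul_le]
    intro r hr y hy
    have hr' : r ∈ I m0 := by
      have h1 : k + m0 + 1 - k = m0 + 1 := by omega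
      rw [h1, hpow _ (by omega)] at hr
      exact hant (by nlinarith) hr
    have hy' := (Submodule.mem_annihilator (N := (I m0 : Submodule A A))).mp hy
    simpa [smul_eq_mul, mul_comm] using hy' r hr'
  simpa using hred hmem
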